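/- In the time-dependent pure exchange economy, let p̄ ∈ D̃ and x̄ with x̄_i ∈ M_i(p̄) for each i satisfy the price variational inequality ⟪Σ_{i=1}^{n}(e_i − x̄_i), p − p̄⟫_m ≥ 0 for all p ∈ D̃. Then the market clearing condition holds: ∫_0^T Σ_{i=1}^{n} (x̄_i^j(t) − e_i^j(t)) dt ≤ 0 for every good j ∈ {1,…,m}. -/

import Mathlib

/-!
STATEMENT 10: In the time-dependent pure exchange economy, if the price `p̄ ∈ D̃` together
with consumptions `x̄_i ∈ M_i(p̄)` satisfies the price variational inequality over `D̃`,
then the market clearing condition holds.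

The price set `D̃` is abstracted as a set `Dt` of prices whose members are nonnegative with
components summing to one a.e., and which contains, for each good `j`, the constant unit
price of good `j` (these are the defining properties of `D̃` used here).
-/

open MeasureTheory
open scoped RealInnerProductSpace

noncomputable section

/-- Lebesgue measure restricted to the time interval `[0, T]`. -/
def timeMeasure (T : ℝ) : Measure ℝ := volume.restrict (Set.Icc 0 T)

/-- The commodity space `L = L²([0,T], ℝ^m)`, with its `L²` (real) inner product
`⟪h, g⟫ = ∫₀ᵀ ⟨h t, g t⟩ dt`. -/
abbrev EcoL (m : ℕ) (T : ℝ) := Lp (EuclideanSpace ℝ (Fin m)) 2 (timeMeasure T)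

/-- The ordered cone `C_L = {α ∈ L : αʲ(t) ≥ 0 for a.e. t, for all goods j}`. -/
def CL (m : ℕ) (T : ℝ) : Set (EcoL m T) :=
  {x | ∀ j : Fin m, ∀ᵐ t ∂(timeMeasure T), 0 ≤ x t j}

/-- The budget set `M_i(p) = {x ∈ C_L : ⟪p, x − e_i⟫ ≤ 0}` of an agent with endowment `e`. -/
def budgetSet (m : ℕ) (T : ℝ) (e p : EcoL m T) : Set (EcoL m T) :=
  {x ∈ CL m T | ⟪p, x - e⟫ ≤ 0}

/-- The truncation set `H = ∏_j H_j`, where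
`H_j = {α ∈ L²([0,T],ℝ) : α(t) ≥ 0 a.e., ∫₀ᵀ α(t) dt ≤ r_j}`. -/
def Hset (m : ℕ) (T : ℝ) (r : Fin m → ℝ) : Set (EcoL m T) :=
  {x | ∀ j : Fin m, (∀ᵐ t ∂(timeMeasure T), 0 ≤ x t j) ∧
    ∫ t, x t j ∂(timeMeasure T) ≤ r j}

/-- The truncated budget set `K̃_i(p) = M_i(p) ∩ H`. -/
def truncBudget (m : ℕ) (T : ℝ) (e : EcoL m T) (r : Fin m → ℝ) (p : EcoL m T) :
    Set (EcoL m T) :=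
  budgetSet m T e p ∩ Hset m T r

/-- The mean value utility `𝒰(x) = ∫₀ᵀ u(t, x(t)) dt`. -/
def meanUtility (m : ℕ) (T : ℝ) (u : ℝ → EuclideanSpace ℝ (Fin m) → ℝ) (x : EcoL m T) : ℝ :=
  ∫ t, u t (x t) ∂(timeMeasure T)

/-- Assumption (A1) on a utility function `u`, with gradient (in the second variable) `G`:
`u(t,w)` is measurable in `t` for each `w`; `u(t,·)` is concave on `ℝ^m₊` for a.e. `t`;
`u(t,·)` is `C¹` on `ℝ^m₊` (with gradient `G(t,·)`) for a.e. `t`; `G(·,w)` is measurable for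
each `w`; and the growth condition `‖∇u(t,w)‖ ≤ C‖w‖ + g(t)` holds on `ℝ^m₊` for a.e. `t`,
for some `C > 0` and some nonnegative `g ∈ L²([0,T],ℝ)`. -/
def AssumptionA1 (m : ℕ) (T : ℝ) (u : ℝ → EuclideanSpace ℝ (Fin m) → ℝ)
    (G : ℝ → EuclideanSpace ℝ (Fin m) → EuclideanSpace ℝ (Fin m)) : Prop :=
  (∀ w, Measurable fun t => u t w) ∧
  (∀ᵐ t ∂(timeMeasure T), ConcaveOn ℝ {w : EuclideanSpace ℝ (Fin m) | ∀ j, 0 ≤ w j} (u t)) ∧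
  (∀ᵐ t ∂(timeMeasure T), ∀ w : EuclideanSpace ℝ (Fin m), (∀ j, 0 ≤ w j) →
    HasGradientAt (u t) (G t w) w) ∧
  (∀ w, Measurable fun t => G t w) ∧
  (∃ C > (0:ℝ), ∃ g : ℝ → ℝ, MemLp g 2 (timeMeasure T) ∧
    (∀ᵐ t ∂(timeMeasure T), 0 ≤ g t) ∧
    (∀ᵐ t ∂(timeMeasure T), ∀ w : EuclideanSpace ℝ (Fin m), (∀ j, 0 ≤ w j) →
      ‖G t w‖ ≤ C * ‖w‖ + g t))

/-- **Lemma (market clearing from the price variational inequality).**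
Let `p̄ ∈ D̃` and `x̄` with `x̄_i ∈ M_i(p̄)` for each agent `i` satisfy
`⟪Σ_i (e_i − x̄_i), p − p̄⟫ ≥ 0` for all `p ∈ D̃`. Then
`∫₀ᵀ Σ_i (x̄_iʲ(t) − e_iʲ(t)) dt ≤ 0` for every good `j`. -/
theorem market_clearing_of_price_vi
    (m n : ℕ) (T : ℝ) (hT : 0 < T)
    (e : Fin n → EcoL m T) (he : ∀ i, e i ∈ CL m T)
    (Dt : Set (EcoL m T))
    (hDt : ∀ p ∈ Dt, (∀ j, ∀ᵐ t ∂(timeMeasure T), 0 ≤ p t j) ∧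
      (∀ᵐ t ∂(timeMeasure T), ∑ j, p t j = 1))
    (hcoord : ∀ j : Fin m, ∃ pj ∈ Dt,
      (pj : ℝ → EuclideanSpace ℝ (Fin m)) =ᵐ[timeMeasure T]
        fun _ => EuclideanSpace.single j (1:ℝ))
    (pbar : EcoL m T) (hpbar : pbar ∈ Dt)
    (xbar : Fin n → EcoL m T)
    (hxbar : ∀ i, xbar i ∈ budgetSet m T (e i) pbar)
    (hVI : ∀ p ∈ Dt, 0 ≤ ⟪∑ i, (e i - xbar i), p - pbar⟫) :
    ∀ j, ∫ t, (∑ i, (xbar i t j - e i t j)) ∂(timeMeasure T) ≤ 0 := by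
  intro j
  obtain ⟨pj, hpjD, hpj⟩ := hcoord j
  set μ := timeMeasure T
  have hval : ∀ i, ∫ t, (xbar i t j - e i t j) ∂μ = ⟪xbar i - e i, pj⟫ := by
    intro i
    rw [MeasureTheory.L2.inner_def]
    refine (integral_congr_ae ?_)
    filter_upwards [Lp.coeFn_sub (xbar i) (e i), hpj] with t h1 h2
    rw [h1, h2]
    simp [EuclideanSpace.inner_single_right]
  have hInt : ∀ i, Integrable (fun t => xbar i t j - e i t j) μ := by
    intro i
    refine (MeasureTheory.L2.integrable_inner (𝕜 := ℝ) (xbar i - e i) pj).congr ?_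
    filter_upwards [Lp.coeFn_sub (xbar i) (e i), hpj] with t h1 h2
    rw [h1, h2]
    simp [EuclideanSpace.inner_single_right]
  rw [integral_finset_sum _ (fun i _ => hInt i)]
  simp_rw [hval]
  have hpbar_nonneg : 0 ≤ ⟪∑ i, (e i - xbar i), pbar⟫ := by
    rw [sum_inner]
    refine Finset.sum_nonneg fun i _ => ?_
    have hb : ⟪pbar, xbar i - e i⟫ ≤ 0 := (hxbar i).2
    rw [real_inner_comm] at hb
    rw [← neg_sub, inner_neg_left]
    linarith
  have hpj_nonneg : 0 ≤ ⟪∑ i, (e i - xbar i), pj⟫ := by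
    have := hVI pj hpjD
    rw [inner_sub_right] at this
    linarith
  have : ∑ i, ⟪xbar i - e i, pj⟫ = -⟪∑ i, (e i - xbar i), pj⟫ := by
    rw [sum_inner, ← Finset.sum_neg_distrib]
    refine Finset.sum_congr rfl fun i _ => ?_
    rw [← neg_sub (e i) (xbar i), inner_neg_left]
  rw [this]
  linarith
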